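/- arXiv:1301.0761 — 8 statements merged into one kernel-verified Lean document; each statement's English description precedes it below -/
import Mathlib

section
/- The map O defined by O(t) = inf_{s>0} s ⊙ t is a kernel: it is monotone (s ≤ t implies O(s) ≤ O(t)), contractive (O(t) ≤ t for all t), and idempotent (O(O(t)) = O(t) for all t). -/
open Set Filter Topology
open scoped ENNReal

/-- A pseudo-multiplication on `[0,∞]`. -/
structure PseudoMul where
  mul : ℝ≥0∞ → ℝ≥0∞ → ℝ≥0∞
  assoc : ∀ a b c, mul (mul a b) c = mul a (mul b c)
  continuousOn : ContinuousOn (fun p : ℝ≥0∞ × ℝ≥0∞ => mul p.1 p.2) (Ioo 0 ⊤ ×ˢ univ)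
  continuousOn_left : ∀ t, ContinuousOn (fun s => mul s t) (Ioi 0)
  mono : ∀ ⦃a b : ℝ≥0∞⦄, a ≤ b → ∀ ⦃c d : ℝ≥0∞⦄, c ≤ d → mul a c ≤ mul b d
  one : ℝ≥0∞
  one_mul : ∀ t, mul one t = t
  eq_zero_of_mul : ∀ s t, mul s t = 0 → s = 0 ∨ t = 0
  zero_mul : ∀ t, mul 0 t = 0
  mul_zero : ∀ t, mul t 0 = 0

/-- The kernel `O(t) = ⨅_{s>0} s ⊙ t`. -/
noncomputable def PseudoMul.O (P : PseudoMul) (t : ℝ≥0∞) : ℝ≥0∞ :=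
  ⨅ s ∈ Ioi (0 : ℝ≥0∞), P.mul s t

lemma PseudoMul.one_pos (P : PseudoMul) : 0 < P.one := by
  rcases eq_or_lt_of_le (zero_le : 0 ≤ P.one) with h | h
  · exfalso
    have h1 : P.mul P.one 1 = 1 := P.one_mul 1
    rw [← h, P.zero_mul] at h1
    simp at h1
  · exact h

lemma PseudoMul.O_le_mul (P : PseudoMul) {s : ℝ≥0∞} (hs : s ∈ Ioo (0:ℝ≥0∞) ⊤)
    (t : ℝ≥0∞) : P.O t ≤ P.mul s (P.O t) := by
  haveI : Nonempty (Ioi (0:ℝ≥0∞)) := ⟨⟨1, by simp⟩⟩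
  have hO : P.O t = ⨅ u : Ioi (0:ℝ≥0∞), P.mul u t := by
    rw [PseudoMul.O, iInf_subtype']
  have hmono : Monotone (fun x => P.mul s x) := fun a b h => P.mono le_rfl h
  have hcont : ContinuousAt (fun x => P.mul s x) (P.O t) := by
    have h2 : ContinuousAt (fun p : ℝ≥0∞ × ℝ≥0∞ => P.mul p.1 p.2) (s, P.O t) :=
      P.continuousOn.continuousAt
        (((isOpen_Ioo.prod isOpen_univ).mem_nhds ⟨hs, mem_univ _⟩))
    exact h2.comp ((continuous_const.prodMk continuous_id).continuousAt)
  have key : P.mul s (P.O t) = ⨅ u : Ioi (0:ℝ≥0∞), P.mul s (P.mul u t) := by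
    rw [hO]; exact Monotone.map_ciInf_of_continuousAt (by rwa [← hO]) hmono
  rw [key]
  refine le_iInf fun u => ?_
  have hsu : 0 < P.mul s u := by
    refine pos_iff_ne_zero.mpr fun h => ?_
    rcases P.eq_zero_of_mul s u h with h1 | h1
    · exact absurd h1 (ne_of_gt hs.1)
    · exact absurd h1 (ne_of_gt u.2)
  rw [← P.assoc]
  exact iInf₂_le _ hsu

theorem kernel_properties (P : PseudoMul) :
    (∀ ⦃s t : ℝ≥0∞⦄, s ≤ t → P.O s ≤ P.O t) ∧
    (∀ t : ℝ≥0∞, P.O t ≤ t) ∧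
    (∀ t : ℝ≥0∞, P.O (P.O t) = P.O t) := by
  have hmono : ∀ ⦃s t : ℝ≥0∞⦄, s ≤ t → P.O s ≤ P.O t := by
    intro s t h
    exact iInf₂_mono fun u _ => P.mono le_rfl h
  have hcontr : ∀ t : ℝ≥0∞, P.O t ≤ t := by
    intro t
    calc P.O t ≤ P.mul P.one t := iInf₂_le _ P.one_pos
      _ = t := P.one_mul t
  refine ⟨hmono, hcontr, fun t => ?_⟩
  refine le_antisymm (hcontr _) ?_
  refine le_iInf₂ fun s hs => ?_
  have h1 : min s 1 ∈ Ioo (0:ℝ≥0∞) ⊤ :=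
    ⟨lt_min hs one_pos, lt_of_le_of_lt (min_le_right _ _) (by simp)⟩
  calc P.O t ≤ P.mul (min s 1) (P.O t) := P.O_le_mul h1 t
    _ ≤ P.mul s (P.O t) := P.mono (min_le_left _ _) le_rfl
end

section
/- For a pseudo-multiplication ⊙, there exists a positive ⊙-finite element if and only if the left identity 1_⊙ is ⊙-finite. -/
open Set Filter Topology
open scoped ENNReal

theorem exists_pos_finite_iff (P : PseudoMul) :
    (∃ t : ℝ≥0∞, 0 < t ∧ P.O t = 0) ↔ P.O P.one = 0 := by
  constructor
  · rintro ⟨t, ht, hOt⟩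
    by_contra hc
    set c := P.O P.one with hc_def
    have hcle : ∀ s ∈ Ioi (0 : ℝ≥0∞), c ≤ P.mul s P.one := fun s hs =>
      biInf_le (fun s => P.mul s P.one) hs
    have key : P.mul c t ≤ P.O t := by
      apply le_iInf₂
      intro s hs
      calc P.mul c t ≤ P.mul (P.mul s P.one) t := P.mono (hcle s hs) le_rfl
        _ = P.mul s (P.mul P.one t) := P.assoc _ _ _
        _ = P.mul s t := by rw [P.one_mul]
    rw [hOt, le_zero_iff] at key
    rcases P.eq_zero_of_mul _ _ key with h | h
    · exact hc h
    · exact ht.ne' h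
  · intro h
    exact ⟨P.one, P.one_pos, h⟩
end

section
/- Let ⊙ be a non-degenerate pseudo-multiplication (i.e., O(1_⊙) = 0). For t ∈ [0,∞], the following are equivalent: (1) t is ⊙-finite; (2) s ⊙ t is ⊙-finite for some s > 0; (3) s ⊙ t ≤ 1_⊙ for some s > 0; (4) t ⊙ s' ≤ 1_⊙ for some s' > 0; (5) t ⊙ s' is ⊙-finite for some s' > 0. -/
open Set Filter Topology
open scoped ENNReal

lemma PseudoMul.O_le (P : PseudoMul) {s : ℝ≥0∞} (hs : 0 < s) (t : ℝ≥0∞) :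
    P.O t ≤ P.mul s t := iInf₂_le s hs

lemma PseudoMul.O_mono (P : PseudoMul) {a b : ℝ≥0∞} (hab : a ≤ b) : P.O a ≤ P.O b :=
  iInf₂_mono fun _ _ => P.mono le_rfl hab

/-- From `O t = 0` extract `s > 0` with `s ⊙ t ≤ 1`. -/
lemma PseudoMul.exists_mul_le_one (P : PseudoMul) {t : ℝ≥0∞} (h : P.O t = 0) :
    ∃ s > (0 : ℝ≥0∞), P.mul s t ≤ P.one := by
  by_contra hc
  push_neg at hc
  have : P.one ≤ P.O t := le_iInf₂ fun s hs => (hc s hs).le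
  rw [h, le_zero_iff] at this
  exact P.one_pos.ne' this

theorem finite_tfae (P : PseudoMul) (hnd : P.O P.one = 0) (t : ℝ≥0∞) :
    [P.O t = 0,
     ∃ s > (0 : ℝ≥0∞), P.O (P.mul s t) = 0,
     ∃ s > (0 : ℝ≥0∞), P.mul s t ≤ P.one,
     ∃ s' > (0 : ℝ≥0∞), P.mul t s' ≤ P.one,
     ∃ s' > (0 : ℝ≥0∞), P.O (P.mul t s') = 0].TFAE := by
  tfae_have 1 → 3
  · exact P.exists_mul_le_one
  tfae_have 3 → 2
  · rintro ⟨s, hs, hle⟩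
    refine ⟨s, hs, le_antisymm ?_ zero_le⟩
    calc P.O (P.mul s t) ≤ P.O P.one := P.O_mono hle
    _ = 0 := hnd
  tfae_have 2 → 1
  · rintro ⟨s, hs, h2⟩
    refine le_antisymm ?_ zero_le
    rw [← h2]
    refine le_iInf₂ fun r hr => ?_
    have hrs : 0 < P.mul r s := by
      rcases eq_or_lt_of_le (zero_le : (0:ℝ≥0∞) ≤ P.mul r s) with h | h
      · rcases P.eq_zero_of_mul r s h.symm with rfl | rfl
        · exact absurd (mem_Ioi.mp hr) (lt_irrefl 0)
        · exact absurd hs (lt_irrefl 0)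
      · exact h
    calc P.O t ≤ P.mul (P.mul r s) t := P.O_le hrs t
    _ = P.mul r (P.mul s t) := P.assoc r s t
  tfae_have 1 → 4
  · intro h1
    by_contra hc
    push_neg at hc
    obtain ⟨s, hs, hst⟩ := P.exists_mul_le_one h1
    -- for every s' > 0 : s ⊙ one ≤ s ⊙ (t ⊙ s') = (s ⊙ t) ⊙ s' ≤ one ⊙ s' = s'
    have key : ∀ s' ∈ Ioi (0 : ℝ≥0∞), P.mul s P.one ≤ s' := by
      intro s' hs'
      calc P.mul s P.one ≤ P.mul s (P.mul t s') := P.mono le_rfl (hc s' hs').le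
      _ = P.mul (P.mul s t) s' := (P.assoc s t s').symm
      _ ≤ P.mul P.one s' := P.mono hst le_rfl
      _ = s' := P.one_mul s'
    have h0 : P.mul s P.one ≤ 0 := le_of_forall_gt_imp_ge_of_dense fun a ha => key a ha
    rcases P.eq_zero_of_mul s P.one (le_zero_iff.mp h0) with rfl | h
    · exact absurd hs (lt_irrefl 0)
    · exact P.one_pos.ne' h
  tfae_have 4 → 5
  · rintro ⟨s', hs', hle⟩
    refine ⟨s', hs', le_antisymm ?_ zero_le⟩
    calc P.O (P.mul t s') ≤ P.O P.one := P.O_mono hle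
    _ = 0 := hnd
  tfae_have 5 → 1
  · rintro ⟨s', hs', h5⟩
    have key : P.mul (P.O t) s' ≤ P.O (P.mul t s') := by
      refine le_iInf₂ fun r hr => ?_
      calc P.mul (P.O t) s' ≤ P.mul (P.mul r t) s' := P.mono (P.O_le hr t) le_rfl
      _ = P.mul r (P.mul t s') := P.assoc r t s'
    rw [h5, le_zero_iff] at key
    rcases P.eq_zero_of_mul _ _ key with h | rfl
    · exact h
    · exact absurd hs' (lt_irrefl 0)
  tfae_finish
end

section
/- For a pseudo-multiplication ⊙, the set F_⊙ of ⊙-finite elements is either {0}, or [0,∞], or a half-open interval [0,φ) for some φ ∈ (1_⊙, ∞] satisfying O(φ) = φ. -/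
open Set Filter Topology
open scoped ENNReal

namespace PseudoMul

variable (P : PseudoMul)

lemma one_pos_s3 : 0 < P.one := by
  rcases eq_or_lt_of_le (zero_le : 0 ≤ P.one) with h | h
  · exfalso
    have := P.one_mul 1
    rw [← h, P.zero_mul] at this
    exact one_ne_zero this.symm
  · exact h

lemma O_le_s3 (t : ℝ≥0∞) {s : ℝ≥0∞} (hs : s ∈ Ioi (0 : ℝ≥0∞)) : P.O t ≤ P.mul s t :=
  iInf₂_le s hs

lemma O_le_self (t : ℝ≥0∞) : P.O t ≤ t := by
  have := P.O_le_s3 t (P.one_pos_s3)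
  rwa [P.one_mul] at this

lemma O_mono_s3 : Monotone P.O := fun a b h =>
  le_iInf₂ fun s hs => (P.O_le_s3 a hs).trans (P.mono le_rfl h)

lemma mul_ne_zero {s t : ℝ≥0∞} (hs : s ≠ 0) (ht : t ≠ 0) : P.mul s t ≠ 0 := by
  intro h
  rcases P.eq_zero_of_mul s t h with h | h
  · exact hs h
  · exact ht h

lemma O_le_O_mul {s : ℝ≥0∞} (hs : s ∈ Ioi (0 : ℝ≥0∞)) (u : ℝ≥0∞) :
    P.O u ≤ P.O (P.mul s u) := by
  refine le_iInf₂ fun r hr => ?_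
  rw [← P.assoc]
  exact P.O_le_s3 u (pos_iff_ne_zero.2 (P.mul_ne_zero (ne_of_gt hr) (ne_of_gt hs)))

lemma continuous_mul_left {s : ℝ≥0∞} (hs : s ∈ Ioo (0 : ℝ≥0∞) ⊤) :
    Continuous fun x => P.mul s x := by
  rw [continuous_iff_continuousAt]
  intro x
  have hmem : (s, x) ∈ Ioo (0 : ℝ≥0∞) ⊤ ×ˢ (univ : Set ℝ≥0∞) := ⟨hs, mem_univ x⟩
  have hopen : IsOpen (Ioo (0 : ℝ≥0∞) ⊤ ×ˢ (univ : Set ℝ≥0∞)) :=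
    isOpen_Ioo.prod isOpen_univ
  have hc : ContinuousAt (fun p : ℝ≥0∞ × ℝ≥0∞ => P.mul p.1 p.2) (s, x) :=
    P.continuousOn.continuousAt (hopen.mem_nhds hmem)
  exact hc.comp ((continuous_const.prodMk continuous_id).continuousAt)

lemma O_eq_sInf (t : ℝ≥0∞) : P.O t = sInf ((fun s => P.mul s t) '' Ioi 0) :=
  (sInf_image).symm

lemma O_le_mul_O {s : ℝ≥0∞} (hs : s ∈ Ioi (0 : ℝ≥0∞)) (t : ℝ≥0∞) :
    P.O t ≤ P.mul s (P.O t) := by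
  set s' := min s 1 with hs'def
  have hs' : s' ∈ Ioo (0 : ℝ≥0∞) ⊤ :=
    ⟨lt_min hs zero_lt_one, lt_of_le_of_lt (min_le_right _ _) ENNReal.one_lt_top⟩
  have key : P.O t ≤ P.mul s' (P.O t) := by
    set A := (fun r => P.mul r t) '' Ioi (0 : ℝ≥0∞) with hA
    have hAne : A.Nonempty := ⟨P.mul 1 t, 1, mem_Ioi.2 zero_lt_one, rfl⟩
    have hmono : Monotone fun x => P.mul s' x := fun a b h => P.mono le_rfl h
    have hcont := (P.continuous_mul_left hs').continuousAt
      (x := sInf A)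
    have hmap : P.mul s' (sInf A) = sInf ((fun x => P.mul s' x) '' A) :=
      Monotone.map_csInf_of_continuousAt hcont hmono hAne
    have hOA : P.O t = sInf A := P.O_eq_sInf t
    rw [hOA, hmap]
    refine le_sInf fun y hy => ?_
    obtain ⟨x, ⟨r, hr, rfl⟩, rfl⟩ := hy
    calc sInf A = P.O t := hOA.symm
      _ ≤ P.mul (P.mul s' r) t :=
          P.O_le_s3 t (pos_iff_ne_zero.2 (P.mul_ne_zero (ne_of_gt hs'.1) (ne_of_gt hr)))
      _ = P.mul s' (P.mul r t) := P.assoc _ _ _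
  exact key.trans (P.mono (min_le_left _ _) le_rfl)

lemma O_le_O_O (t : ℝ≥0∞) : P.O t ≤ P.O (P.O t) :=
  le_iInf₂ fun _ hs => P.O_le_mul_O hs t

lemma O_one_eq_zero {t : ℝ≥0∞} (ht : t ≠ 0) (hOt : P.O t = 0) : P.O P.one = 0 := by
  have h : P.mul (P.O P.one) t ≤ P.O t := by
    refine le_iInf₂ fun s hs => ?_
    calc P.mul (P.O P.one) t ≤ P.mul (P.mul s P.one) t :=
          P.mono (P.O_le_s3 P.one hs) le_rfl
      _ = P.mul s t := by rw [P.assoc, P.one_mul]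
  rw [hOt, le_zero_iff] at h
  rcases P.eq_zero_of_mul _ _ h with h | h
  · exact h
  · exact absurd h ht

lemma exists_gt_of_O_eq_zero {t : ℝ≥0∞} (ht0 : 0 < t) (htop : t ≠ ⊤)
    (hO : P.O t = 0) : ∃ t' > t, P.O t' = 0 := by
  have hlt : P.O t < t := hO ▸ ht0
  rw [PseudoMul.O] at hlt
  obtain ⟨s, hslt⟩ := iInf_lt_iff.1 hlt
  obtain ⟨hs, hst⟩ := iInf_lt_iff.1 hslt
  set s' := min s 1 with hs'def
  have hs' : s' ∈ Ioo (0 : ℝ≥0∞) ⊤ :=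
    ⟨lt_min hs zero_lt_one, lt_of_le_of_lt (min_le_right _ _) ENNReal.one_lt_top⟩
  have h1 : P.mul s' t < t := lt_of_le_of_lt (P.mono (min_le_left _ _) le_rfl) hst
  have hopen : IsOpen {x : ℝ≥0∞ | P.mul s' x < t} :=
    (P.continuous_mul_left hs').isOpen_preimage (Iio t) isOpen_Iio
  have hmemU : t ∈ {x : ℝ≥0∞ | P.mul s' x < t} := h1
  have hnb : (𝓝[>] t).NeBot :=
    nhdsGT_neBot_of_exists_gt ⟨⊤, lt_top_iff_ne_top.2 htop⟩
  have hU : {x : ℝ≥0∞ | P.mul s' x < t} ∈ 𝓝[>] t :=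
    mem_nhdsWithin_of_mem_nhds (hopen.mem_nhds hmemU)
  obtain ⟨t', ht'U, ht'gt⟩ := Filter.nonempty_of_mem (Filter.inter_mem hU self_mem_nhdsWithin)
  refine ⟨t', ht'gt, ?_⟩
  have h2 : P.O t' ≤ P.O (P.mul s' t') := P.O_le_O_mul hs'.1 t'
  have h3 : P.O (P.mul s' t') ≤ P.O t := P.O_mono_s3 (le_of_lt ht'U)
  rw [hO] at h3
  exact le_antisymm (h2.trans h3) zero_le

lemma O_zero : P.O 0 = 0 :=
  le_antisymm ((P.O_le_self 0)) zero_le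

end PseudoMul

theorem finite_set_trichotomy (P : PseudoMul) :
    {t : ℝ≥0∞ | P.O t = 0} = {0} ∨
    {t : ℝ≥0∞ | P.O t = 0} = univ ∨
    ∃ φ : ℝ≥0∞, P.one < φ ∧ P.O φ = φ ∧ {t : ℝ≥0∞ | P.O t = 0} = Iio φ := by
  set F := {t : ℝ≥0∞ | P.O t = 0} with hF
  have h0F : (0 : ℝ≥0∞) ∈ F := P.O_zero
  have hdc : ∀ ⦃a b : ℝ≥0∞⦄, a ≤ b → b ∈ F → a ∈ F := fun a b hab hb =>
    le_antisymm (le_trans (P.O_mono_s3 hab) (le_of_eq hb)) zero_le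
  by_cases htop : (⊤ : ℝ≥0∞) ∈ F
  · right; left
    ext t
    simp only [mem_univ, iff_true]
    exact hdc le_top htop
  by_cases hzero : F = {0}
  · left; exact hzero
  · right; right
    -- get a nonzero element of F
    have hex : ∃ t₀ ∈ F, t₀ ≠ 0 := by
      by_contra h
      push_neg at h
      apply hzero
      ext x
      constructor
      · intro hx; exact h x hx
      · intro hx; rw [mem_singleton_iff] at hx; rw [hx]; exact h0F
    obtain ⟨t₀, ht₀F, ht₀0⟩ := hex
    set φ := sSup F with hφ
    have hφ_notmem : φ ∉ F := by
      intro hφF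
      have hφtop : φ ≠ ⊤ := fun h => htop (h ▸ hφF)
      have hφpos : 0 < φ :=
        lt_of_lt_of_le (pos_iff_ne_zero.2 ht₀0) (le_sSup ht₀F)
      obtain ⟨t', ht'gt, ht'O⟩ := P.exists_gt_of_O_eq_zero hφpos hφtop hφF
      exact absurd (le_sSup (show t' ∈ F from ht'O)) (not_le_of_gt ht'gt)
    have hFIio : F = Iio φ := by
      ext t
      constructor
      · intro ht
        exact lt_of_le_of_ne (le_sSup ht) (fun h => hφ_notmem (by show sSup F ∈ F; rw [← h]; exact ht))
      · intro ht
        rw [mem_Iio, hφ] at ht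
        obtain ⟨f, hfF, htf⟩ := lt_sSup_iff.1 ht
        exact hdc (le_of_lt htf) hfF
    refine ⟨φ, ?_, ?_, hFIio⟩
    · have hone : P.one ∈ F := P.O_one_eq_zero ht₀0 ht₀F
      rwa [hFIio] at hone
    · refine le_antisymm (P.O_le_self φ) ?_
      by_contra h
      push_neg at h
      have hmem : P.O φ ∈ F := by rw [hFIio]; exact h
      have : P.O (P.O φ) = 0 := hmem
      have h2 : P.O φ ≤ P.O (P.O φ) := P.O_le_O_O φ
      rw [this, le_zero_iff] at h2
      exact hφ_notmem h2
end

section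
/- If a pseudo-multiplication ⊙ is non-degenerate (O(1_⊙) = 0), then ⊙ is jointly continuous on [0, 1_⊙] × [0, 1_⊙]; in particular, if s_n → 0 and t_n → t in [0, 1_⊙], then s_n ⊙ t_n → 0. -/
open Set Filter Topology
open scoped ENNReal

private lemma exists_small (P : PseudoMul) (hnd : P.O P.one = 0) {ε : ℝ≥0∞} (hε : 0 < ε) :
    ∃ s₀ : ℝ≥0∞, 0 < s₀ ∧ P.mul s₀ P.one < ε := by
  have h : P.O P.one < ε := hnd ▸ hε
  rw [PseudoMul.O] at h
  simp only [iInf_lt_iff, mem_Ioi] at h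
  obtain ⟨s₀, hs₀, h⟩ := h
  exact ⟨s₀, hs₀, h⟩

theorem continuous_of_nondegenerate (P : PseudoMul) (hnd : P.O P.one = 0) :
    ContinuousOn (fun p : ℝ≥0∞ × ℝ≥0∞ => P.mul p.1 p.2) (Icc 0 P.one ×ˢ Icc 0 P.one) ∧
    ∀ (s t : ℕ → ℝ≥0∞) (t₀ : ℝ≥0∞),
      (∀ n, s n ∈ Icc 0 P.one) → (∀ n, t n ∈ Icc 0 P.one) →
      Tendsto s atTop (𝓝 0) → Tendsto t atTop (𝓝 t₀) →
      Tendsto (fun n => P.mul (s n) (t n)) atTop (𝓝 0) := by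
  constructor
  · intro p hp
    obtain ⟨hp1, hp2⟩ := hp
    simp only [mem_Icc] at hp1 hp2
    rcases eq_or_lt_of_le (zero_le : 0 ≤ p.1) with h0 | h0
    · -- p.1 = 0
      have hval : P.mul p.1 p.2 = 0 := by rw [← h0, P.zero_mul]
      rw [ContinuousWithinAt, hval, ENNReal.tendsto_nhds_zero]
      intro ε hε
      obtain ⟨s₀, hs₀, hsmall⟩ := exists_small P hnd hε
      have h1 : ∀ᶠ q : ℝ≥0∞ × ℝ≥0∞ in 𝓝[Icc 0 P.one ×ˢ Icc 0 P.one] p, q.1 < s₀ := by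
        apply eventually_nhdsWithin_of_eventually_nhds
        have : ContinuousAt (fun q : ℝ≥0∞ × ℝ≥0∞ => q.1) p := continuousAt_fst
        exact this.eventually_lt continuousAt_const (by rw [← h0]; exact hs₀)
      have h2 : ∀ᶠ q : ℝ≥0∞ × ℝ≥0∞ in 𝓝[Icc 0 P.one ×ˢ Icc 0 P.one] p,
          q ∈ Icc 0 P.one ×ˢ Icc 0 P.one := self_mem_nhdsWithin
      filter_upwards [h1, h2] with q hq1 hq2
      calc P.mul q.1 q.2 ≤ P.mul s₀ P.one := P.mono hq1.le hq2.2.2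
        _ ≤ ε := hsmall.le
    · rcases lt_or_eq_of_le (le_top : p.1 ≤ ⊤) with htop | htop
      · -- 0 < p.1 < ⊤ : interior point of Ioo 0 ⊤ ×ˢ univ
        have hopen : IsOpen (Ioo (0:ℝ≥0∞) ⊤ ×ˢ (univ : Set ℝ≥0∞)) :=
          isOpen_Ioo.prod isOpen_univ
        have hmem : p ∈ Ioo (0:ℝ≥0∞) ⊤ ×ˢ (univ : Set ℝ≥0∞) := ⟨⟨h0, htop⟩, mem_univ _⟩
        exact (P.continuousOn.continuousAt (hopen.mem_nhds hmem)).continuousWithinAt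
      · -- p.1 = ⊤, hence one = ⊤
        have hone : P.one = ⊤ := top_le_iff.mp (htop ▸ hp1.2)
        have hmul_top : ∀ t, P.mul ⊤ t = t := by
          intro t; rw [← hone, P.one_mul]
        have hval : P.mul p.1 p.2 = p.2 := by rw [htop, hmul_top]
        rw [ContinuousWithinAt, hval, tendsto_order]
        constructor
        · intro a ha
          obtain ⟨t₁, ht₁a, ht₁p⟩ := exists_between ha
          have hc := (P.continuousOn_left t₁) ⊤ (mem_Ioi.mpr (by norm_num))
          have hc' : Tendsto (fun s => P.mul s t₁) (𝓝 ⊤) (𝓝 t₁) := by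
            have heq : 𝓝[Ioi (0:ℝ≥0∞)] ⊤ = 𝓝 ⊤ :=
              nhdsWithin_eq_nhds.mpr (isOpen_Ioi.mem_nhds (by norm_num))
            have := hc
            rw [ContinuousWithinAt, heq, hmul_top] at this
            exact this
          have hev : ∀ᶠ s : ℝ≥0∞ in 𝓝 ⊤, a < P.mul s t₁ :=
            hc' (isOpen_Ioi.mem_nhds (mem_Ioi.mpr ht₁a))
          have hev1 : ∀ᶠ q : ℝ≥0∞ × ℝ≥0∞ in 𝓝 p, a < P.mul q.1 t₁ := by
            have : Tendsto (fun q : ℝ≥0∞ × ℝ≥0∞ => q.1) (𝓝 p) (𝓝 p.1) :=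
              continuousAt_fst
            rw [htop] at this
            exact this.eventually hev
          have hev2 : ∀ᶠ q : ℝ≥0∞ × ℝ≥0∞ in 𝓝 p, t₁ < q.2 :=
            (continuousAt_const : ContinuousAt (fun _ : ℝ≥0∞ × ℝ≥0∞ => t₁) p).eventually_lt continuousAt_snd ht₁p
          apply eventually_nhdsWithin_of_eventually_nhds
          filter_upwards [hev1, hev2] with q hq1 hq2
          exact lt_of_lt_of_le hq1 (P.mono le_rfl hq2.le)
        · intro b hb
          have hev2 : ∀ᶠ q : ℝ≥0∞ × ℝ≥0∞ in 𝓝 p, q.2 < b :=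
            (continuousAt_snd : ContinuousAt Prod.snd p).eventually_lt continuousAt_const hb
          apply eventually_nhdsWithin_of_eventually_nhds
          filter_upwards [hev2] with q hq2
          calc P.mul q.1 q.2 ≤ P.mul ⊤ q.2 := P.mono le_top le_rfl
            _ = q.2 := hmul_top q.2
            _ < b := hq2
  · intro s t t₀ hs ht hs0 _
    rw [ENNReal.tendsto_nhds_zero]
    intro ε hε
    obtain ⟨s₀, hs₀, hsmall⟩ := exists_small P hnd hε
    have hev : ∀ᶠ n in atTop, s n < s₀ := hs0 (isOpen_Iio.mem_nhds hs₀)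
    filter_upwards [hev] with n hn
    calc P.mul (s n) (t n) ≤ P.mul s₀ P.one := P.mono hn.le (ht n).2
      _ ≤ ε := hsmall.le
end

section
/- If the monoid ([0, 1_⊙], ⊙) is commutative, then the pseudo-multiplication ⊙ is non-degenerate, i.e., O(1_⊙) = inf_{s>0} s ⊙ 1_⊙ = 0. -/
open Set Filter Topology
open scoped ENNReal

theorem nondegenerate_of_commutative (P : PseudoMul)
    (hcomm : ∀ s ∈ Icc 0 P.one, ∀ t ∈ Icc 0 P.one, P.mul s t = P.mul t s) :
    P.O P.one = 0 := by
  -- First, `P.one ≠ 0`.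
  have hone : (0 : ℝ≥0∞) < P.one := by
    rcases eq_or_ne P.one 0 with h | h
    · exfalso
      have h1 := P.one_mul 1
      rw [h, P.zero_mul] at h1
      exact one_ne_zero h1.symm
    · exact pos_iff_ne_zero.mpr h
  -- For any `s` with `0 < s ≤ P.one`, we have `O(one) ≤ s`.
  have key : ∀ s : ℝ≥0∞, 0 < s → s ≤ P.one → P.O P.one ≤ s := by
    intro s hs hle
    have h1 : P.O P.one ≤ P.mul s P.one := biInf_le (fun s => P.mul s P.one) hs
    rwa [hcomm s ⟨zero_le, hle⟩ P.one ⟨zero_le, le_rfl⟩, P.one_mul] at h1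
  by_contra h
  have hO : 0 < P.O P.one := pos_iff_ne_zero.mpr h
  have hm : 0 < min (P.O P.one) P.one := lt_min hO hone
  obtain ⟨x, hx0, hxm⟩ := exists_between hm
  exact absurd (key x hx0 (hxm.le.trans (min_le_right _ _)))
    (not_le.mpr (hxm.trans_le (min_le_left _ _)))
end

section
/- Let ⊙ be a pseudo-multiplication whose set of ⊙-finite elements equals [0, φ) for some φ ∈ (1_⊙, ∞]. Then t ⊙ φ = φ ⊙ t = φ for all 0 < t ≤ φ; in particular, φ is idempotent: φ ⊙ φ = φ. -/
open Set Filter Topology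
open scoped ENNReal

theorem phi_absorbing (P : PseudoMul) (φ : ℝ≥0∞) (hφ : P.one < φ)
    (hF : {t : ℝ≥0∞ | P.O t = 0} = Iio φ) :
    (∀ t : ℝ≥0∞, 0 < t → t ≤ φ → P.mul t φ = φ ∧ P.mul φ t = φ) ∧
    P.mul φ φ = φ := by
  have key : ∀ t : ℝ≥0∞, P.O t = 0 ↔ t < φ := fun t => by
    constructor
    · intro h; have : t ∈ Iio φ := hF ▸ h; exact this
    · intro h; have : t ∈ {t : ℝ≥0∞ | P.O t = 0} := hF ▸ h; exact this
  have one_pos : 0 < P.one := by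
    rcases eq_or_lt_of_le (zero_le : 0 ≤ P.one) with h | h
    · exfalso
      have h1 := P.one_mul 1
      rw [← h, P.zero_mul] at h1
      exact one_ne_zero h1.symm
    · exact h
  have φ_pos : 0 < φ := lt_trans one_pos hφ
  have hOle : ∀ (v t : ℝ≥0∞), 0 < v → P.O t ≤ P.mul v t := fun v t hv =>
    iInf₂_le v hv
  have hOφ : P.O φ ≠ 0 := fun h => lt_irrefl φ ((key φ).mp h)
  -- Iio φ is closed under mul
  have hclosed : ∀ s u : ℝ≥0∞, s < φ → u < φ → P.mul s u < φ := by
    intro s u hs hu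
    rcases eq_or_lt_of_le (zero_le : 0 ≤ s) with hs0 | hs0
    · rw [← hs0, P.zero_mul]; exact φ_pos
    rw [← key]
    have hOs : P.O s = 0 := (key s).mpr hs
    have hOu : P.O u = 0 := (key u).mpr hu
    have h1 : P.O (P.mul s u) ≤ P.O u := by
      refine le_iInf₂ fun v hv => ?_
      have hr : ∃ r ∈ Ioi (0:ℝ≥0∞), P.mul r s ≤ v := by
        by_contra hno
        push_neg at hno
        have hv' : v ≤ P.O s := le_iInf₂ fun r hr => (hno r hr).le
        rw [hOs] at hv'
        exact hv.ne' (le_antisymm hv' (zero_le : 0 ≤ v))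
      obtain ⟨r, hrpos, hrs⟩ := hr
      calc P.O (P.mul s u) ≤ P.mul r (P.mul s u) := hOle r _ hrpos
        _ = P.mul (P.mul r s) u := (P.assoc r s u).symm
        _ ≤ P.mul v u := P.mono hrs le_rfl
    rw [hOu] at h1
    exact le_antisymm h1 zero_le
  -- upper bound: mul φ φ ≤ φ
  have hmul_le : P.mul φ φ ≤ φ := by
    rcases eq_or_ne φ ⊤ with htop | htop
    · rw [htop]; exact le_top
    have hmem : ((φ, φ) : ℝ≥0∞ × ℝ≥0∞) ∈ Ioo (0:ℝ≥0∞) ⊤ ×ˢ (univ : Set ℝ≥0∞) :=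
      ⟨⟨φ_pos, lt_top_iff_ne_top.mpr htop⟩, mem_univ _⟩
    have hpair : ContinuousWithinAt (fun s : ℝ≥0∞ => ((s, s) : ℝ≥0∞ × ℝ≥0∞))
        (Ioo 0 ⊤) φ :=
      (continuous_id.prodMk continuous_id).continuousWithinAt
    have hc : ContinuousWithinAt (fun s : ℝ≥0∞ => P.mul s s) (Ioo 0 ⊤) φ := by
      have hc' := ContinuousWithinAt.comp (f := fun s : ℝ≥0∞ => ((s, s) : ℝ≥0∞ × ℝ≥0∞))
        (P.continuousOn (φ, φ) hmem) hpair
        (fun x hx => ⟨hx, mem_univ _⟩)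
      exact hc'
    have hne : (𝓝[Ioo (0:ℝ≥0∞) φ] φ).NeBot := by
      have heq : 𝓝[Iio φ] φ = 𝓝[Ioo (0:ℝ≥0∞) φ] φ := by
        rw [nhdsWithin_restrict' (Iio φ) (IsOpen.mem_nhds isOpen_Ioi φ_pos)]
        congr 1
        ext x
        simp [mem_Ioo, and_comm]
      rw [← heq]
      exact nhdsWithin_Iio_self_neBot' ⟨0, φ_pos⟩
    have htend : Tendsto (fun s : ℝ≥0∞ => P.mul s s) (𝓝[Ioo (0:ℝ≥0∞) φ] φ)
        (𝓝 (P.mul φ φ)) :=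
      hc.mono_left (nhdsWithin_mono φ (Ioo_subset_Ioo le_rfl le_top))
    haveI := hne
    exact le_of_tendsto htend
      (eventually_nhdsWithin_of_forall fun s hs => (hclosed s s hs.2 hs.2).le)
  -- lower bound A: φ ≤ mul t φ
  have hA : ∀ t : ℝ≥0∞, 0 < t → φ ≤ P.mul t φ := by
    intro t ht
    by_contra hlt
    push_neg at hlt
    have h0 : P.O (P.mul t φ) = 0 := (key _).mpr hlt
    have hge : P.O φ ≤ P.O (P.mul t φ) := by
      refine le_iInf₂ fun s hs => ?_
      have hst : 0 < P.mul s t := by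
        rcases eq_or_lt_of_le (zero_le : 0 ≤ P.mul s t) with h | h
        · rcases P.eq_zero_of_mul s t h.symm with h' | h'
          · exact absurd h' (ne_of_gt hs)
          · exact absurd h' (ne_of_gt ht)
        · exact h
      calc P.O φ ≤ P.mul (P.mul s t) φ := hOle _ _ hst
        _ = P.mul s (P.mul t φ) := P.assoc s t φ
    rw [h0] at hge
    exact hOφ (le_antisymm hge zero_le)
  -- lower bound B: φ ≤ mul φ t
  have hB : ∀ t : ℝ≥0∞, 0 < t → φ ≤ P.mul φ t := by
    intro t ht
    have hpos : 0 < P.mul φ t := by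
      rcases eq_or_lt_of_le (zero_le : 0 ≤ P.mul φ t) with h | h
      · rcases P.eq_zero_of_mul φ t h.symm with h' | h'
        · exact absurd h' (ne_of_gt φ_pos)
        · exact absurd h' (ne_of_gt ht)
      · exact h
    by_contra hlt
    push_neg at hlt
    have h0 : P.O (P.mul φ t) = 0 := (key _).mpr hlt
    have hge : P.mul φ t ≤ P.O (P.mul φ t) := by
      refine le_iInf₂ fun s hs => ?_
      calc P.mul φ t ≤ P.mul (P.mul s φ) t := P.mono (hA s hs) le_rfl
        _ = P.mul s (P.mul φ t) := P.assoc s φ t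
    rw [h0] at hge
    exact (ne_of_gt hpos) (le_antisymm hge zero_le)
  constructor
  · intro t ht htφ
    exact ⟨le_antisymm (le_trans (P.mono htφ le_rfl) hmul_le) (hA t ht),
      le_antisymm (le_trans (P.mono le_rfl htφ) hmul_le) (hB t ht)⟩
  · exact le_antisymm hmul_le (hA φ φ_pos)
end

section
/- For a non-degenerate pseudo-multiplication ⊙, if s ⊙ t ≤ 1_⊙ for some s > 0, then lim_{s'→0⁺} t ⊙ s' = 0; in particular there exists s' > 0 with t ⊙ s' ≤ 1_⊙. -/
open Set Filter Topology
open scoped ENNReal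

theorem right_small_of_left_small (P : PseudoMul) (hnd : P.O P.one = 0)
    {s t : ℝ≥0∞} (hs : 0 < s) (h : P.mul s t ≤ P.one) :
    Tendsto (fun s' => P.mul t s') (𝓝[>] (0 : ℝ≥0∞)) (𝓝 0) ∧
    ∃ s' : ℝ≥0∞, 0 < s' ∧ P.mul t s' ≤ P.one := by
  have hone : (0:ℝ≥0∞) < P.one := by
    rcases eq_or_lt_of_le (zero_le : (0:ℝ≥0∞) ≤ P.one) with h0 | h0
    · exfalso
      have := P.one_mul 1
      rw [← h0, P.zero_mul] at this
      exact one_ne_zero this.symm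
    · exact h0
  have key : ∀ ε : ℝ≥0∞, 0 < ε → ∀ s' : ℝ≥0∞, s' < P.mul s ε → P.mul t s' < ε := by
    intro ε hε s' hs'
    by_contra hle
    push_neg at hle
    have h1 : P.mul s (P.mul t s') ≤ s' := by
      rw [← P.assoc]
      calc P.mul (P.mul s t) s' ≤ P.mul P.one s' := P.mono h le_rfl
        _ = s' := P.one_mul s'
    have h2 : P.mul s ε ≤ s' := le_trans (P.mono le_rfl hle) h1
    exact absurd hs' (not_lt.mpr h2)
  have hpos : ∀ ε : ℝ≥0∞, 0 < ε → 0 < P.mul s ε := by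
    intro ε hε
    rcases eq_or_lt_of_le (zero_le : (0:ℝ≥0∞) ≤ P.mul s ε) with h0 | h0
    · rcases P.eq_zero_of_mul s ε h0.symm with h | h
      · exact absurd h hs.ne'
      · exact absurd h hε.ne'
    · exact h0
  have htend : Tendsto (fun s' => P.mul t s') (𝓝[>] (0 : ℝ≥0∞)) (𝓝 0) := by
    rw [ENNReal.tendsto_nhds_zero]
    intro ε hε
    filter_upwards [mem_nhdsWithin_of_mem_nhds (Iio_mem_nhds (hpos ε hε))] with s' hs'
    exact (key ε hε s' hs').le
  refine ⟨htend, ?_⟩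
  have : ∀ᶠ s' in 𝓝[>] (0:ℝ≥0∞), P.mul t s' < P.one ∧ 0 < s' := by
    filter_upwards [mem_nhdsWithin_of_mem_nhds (Iio_mem_nhds (hpos P.one hone)),
      self_mem_nhdsWithin] with s' h1 h2
    exact ⟨key P.one hone s' h1, h2⟩
  rcases this.exists with ⟨s', h1, h2⟩
  exact ⟨s', h2, h1.le⟩
end
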